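/- Let g : [0, n+1/2] → ℝ be a continuous piecewise-linear function as encoded by a slope sequence (σ_1,…,σ_{n+1}) satisfying conditions (C1) σ_{1,1} = 1 and (C2) σ_{j,2} = 1 ⟹ σ_{j+1,1} = 1, with g(0) = −1/2. Assume M := max g > 0, and let m be such that m + 1/2 = min g⁻¹(M). Then m > 0, σ_m = (1,1), g(m − 1/2) = M − 1, and g(x) ≤ M − 1 for all 0 ≤ x ≤ m − 1/2. -/

import Mathlib

/-- The slope data: `σ_j = (σ_{j,1}, σ_{j,2})` for `1 ≤ j ≤ n` (0-indexed here) and the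
final single slope `σ_{n+1} = σlast`. -/
def sigFull (n : ℕ) (σ : Fin n → ℤ × ℤ) (σlast : ℤ) (j : ℕ) : ℤ × ℤ :=
  if h : j < n then σ ⟨j, h⟩ else (σlast, σlast)

/-- The slope of `g` on the half-integer interval `(t/2, (t+1)/2)`:
`σ_{j,1}` on `(j-1, j-1/2)` and `σ_{j,2}` on `(j-1/2, j)`, and `σ_{n+1}` on `(n, n+1/2)`. -/
def plSlope (n : ℕ) (σ : Fin n → ℤ × ℤ) (σlast : ℤ) (t : ℕ) : ℤ :=
  if t % 2 = 0 then (sigFull n σ σlast (t / 2)).1 else (sigFull n σ σlast (t / 2)).2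

/-- The values of `g` at the half-integer grid points `t/2`, with `g(0) = -1/2`. -/
noncomputable def plVal (n : ℕ) (σ : Fin n → ℤ × ℤ) (σlast : ℤ) : ℕ → ℝ
  | 0 => -1/2
  | t + 1 => plVal n σ σlast t + (plSlope n σ σlast t : ℝ) / 2

/-- The continuous piecewise-linear function `g : [0, n+1/2] → ℝ` with `g(0) = -1/2`
encoded by the slope sequence `(σ_1, …, σ_n, σ_{n+1})`. -/
noncomputable def plFun (n : ℕ) (σ : Fin n → ℤ × ℤ) (σlast : ℤ) (x : ℝ) : ℝ :=
  let t : ℕ := (⌊2 * x⌋).toNat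
  plVal n σ σlast t + (x - t / 2) * (plSlope n σ σlast t : ℝ)

section aux
variable (n : ℕ) (σ : Fin n → ℤ × ℤ) (σlast : ℤ)

lemma plSlope_pm (hσ : ∀ j : Fin n, ((σ j).1 = 1 ∨ (σ j).1 = -1) ∧ ((σ j).2 = 1 ∨ (σ j).2 = -1))
    (hlast : σlast = 1 ∨ σlast = -1) (t : ℕ) :
    plSlope n σ σlast t = 1 ∨ plSlope n σ σlast t = -1 := by
  unfold plSlope sigFull
  split <;> split
  · exact (hσ _).1
  · exact hlast
  · exact (hσ _).2
  · exact hlast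

lemma plSlope_even (k : ℕ) : plSlope n σ σlast (2*k) = (sigFull n σ σlast k).1 := by
  simp [plSlope, Nat.mul_mod_right, Nat.mul_div_cancel_left]

lemma plSlope_odd (k : ℕ) : plSlope n σ σlast (2*k+1) = (sigFull n σ σlast k).2 := by
  have h1 : (2*k+1) % 2 = 1 := by omega
  have h2 : (2*k+1) / 2 = k := by omega
  simp [plSlope, h1, h2]

lemma plFun_eq (x : ℝ) : plFun n σ σlast x =
    plVal n σ σlast (⌊2*x⌋).toNat + (x - ((⌊2*x⌋).toNat : ℝ) / 2) * (plSlope n σ σlast (⌊2*x⌋).toNat : ℝ) := rfl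

lemma plFun_grid (t : ℕ) : plFun n σ σlast ((t:ℝ)/2) = plVal n σ σlast t := by
  have h2 : (2:ℝ) * ((t:ℝ)/2) = (t:ℝ) := by ring
  rw [plFun_eq, h2, Int.floor_natCast, Int.toNat_natCast]
  ring

lemma plVal_int (hσ : ∀ j : Fin n, ((σ j).1 = 1 ∨ (σ j).1 = -1) ∧ ((σ j).2 = 1 ∨ (σ j).2 = -1))
    (hlast : σlast = 1 ∨ σlast = -1) :
    ∀ k, (∃ z : ℤ, plVal n σ σlast (2*k) = (z:ℝ) + 1/2) ∧
      (∃ z : ℤ, plVal n σ σlast (2*k+1) = (z:ℝ)) := by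
  intro k
  induction k with
  | zero =>
    constructor
    · exact ⟨-1, by norm_num [plVal]⟩
    · rcases plSlope_pm n σ σlast hσ hlast 0 with h | h
      · exact ⟨0, by norm_num [plVal, h]⟩
      · exact ⟨-1, by norm_num [plVal, h]⟩
  | succ k ih =>
    obtain ⟨⟨z0, hz0⟩, ⟨z1, hz1⟩⟩ := ih
    have he : 2*(k+1) = (2*k+1)+1 := by ring
    have heq : plVal n σ σlast (2*(k+1)) = plVal n σ σlast (2*k+1) + (plSlope n σ σlast (2*k+1) : ℝ)/2 := by
      rw [he]; rfl
    have hev : ∃ z : ℤ, plVal n σ σlast (2*(k+1)) = (z:ℝ) + 1/2 := by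
      rcases plSlope_pm n σ σlast hσ hlast (2*k+1) with h | h
      · exact ⟨z1, by rw [heq, hz1, h]; push_cast; ring⟩
      · exact ⟨z1 - 1, by rw [heq, hz1, h]; push_cast; ring⟩
    refine ⟨hev, ?_⟩
    obtain ⟨z2, hz2⟩ := hev
    have heq2 : plVal n σ σlast (2*(k+1)+1) = plVal n σ σlast (2*(k+1)) + (plSlope n σ σlast (2*(k+1)) : ℝ)/2 := rfl
    rcases plSlope_pm n σ σlast hσ hlast (2*(k+1)) with h | h
    · exact ⟨z2 + 1, by rw [heq2, hz2, h]; push_cast; ring⟩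
    · exact ⟨z2, by rw [heq2, hz2, h]; push_cast; ring⟩

end aux

/-- Under (C1), (C2): if `M = max g > 0` and `m + 1/2 = min g⁻¹(M)`, then `m > 0`,
`σ_m = (1,1)`, `g(m - 1/2) = M - 1`, and `g(x) ≤ M - 1` for `0 ≤ x ≤ m - 1/2`. -/
theorem pl_before_first_max (n : ℕ) (σ : Fin n → ℤ × ℤ) (σlast : ℤ)
    (hσ : ∀ j : Fin n, ((σ j).1 = 1 ∨ (σ j).1 = -1) ∧ ((σ j).2 = 1 ∨ (σ j).2 = -1))
    (hlast : σlast = 1 ∨ σlast = -1)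
    (hC1 : (sigFull n σ σlast 0).1 = 1)
    (hC2 : ∀ j < n, (sigFull n σ σlast j).2 = 1 → (sigFull n σ σlast (j + 1)).1 = 1)
    (M : ℝ)
    (hM : IsGreatest (plFun n σ σlast '' Set.Icc 0 ((n : ℝ) + 1/2)) M)
    (hMpos : 0 < M)
    (m : ℕ)
    (hm : IsLeast {x : ℝ | x ∈ Set.Icc (0 : ℝ) ((n : ℝ) + 1/2) ∧ plFun n σ σlast x = M}
      ((m : ℝ) + 1/2)) :
    0 < m ∧ sigFull n σ σlast (m - 1) = (1, 1) ∧
      plFun n σ σlast ((m : ℝ) - 1/2) = M - 1 ∧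
      ∀ x ∈ Set.Icc (0 : ℝ) ((m : ℝ) - 1/2), plFun n σ σlast x ≤ M - 1 := by
  have spm := plSlope_pm n σ σlast hσ hlast
  have hmn : m ≤ n := by
    have h1 := hm.1.1.2
    have h2 : (m:ℝ) ≤ n := by linarith
    exact_mod_cast h2
  have hcast : (m:ℝ) + 1/2 = ((2*m+1 : ℕ) : ℝ)/2 := by push_cast; ring
  have hMval : plVal n σ σlast (2*m+1) = M := by
    have h := hm.1.2
    rw [hcast, plFun_grid] at h
    exact h
  have hmem : ∀ t : ℕ, t ≤ 2*m+1 → ((t:ℝ)/2) ∈ Set.Icc (0:ℝ) ((n:ℝ)+1/2) := by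
    intro t ht
    constructor
    · positivity
    · have h1 : (t:ℝ) ≤ 2*m+1 := by exact_mod_cast ht
      have h2 : (m:ℝ) ≤ n := by exact_mod_cast hmn
      linarith
  have hle : ∀ t ≤ 2*m+1, plVal n σ σlast t ≤ M :=
    fun t ht => hM.2 ⟨(t:ℝ)/2, hmem t ht, plFun_grid n σ σlast t⟩
  have hlt : ∀ t ≤ 2*m, plVal n σ σlast t < M := by
    intro t ht
    rcases lt_or_eq_of_le (hle t (by omega)) with h | h
    · exact h
    · exfalso
      have h2 := hm.2 ⟨hmem t (by omega), by rw [plFun_grid]; exact h⟩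
      have h3 : (t:ℝ) ≤ 2*m := by exact_mod_cast ht
      linarith
  obtain ⟨w, hw⟩ := (plVal_int n σ σlast hσ hlast m).2
  have hMw : M = (w:ℝ) := by rw [← hMval, hw]
  have hodd : ∀ k < m, plVal n σ σlast (2*k+1) ≤ M - 1 := by
    intro k hk
    obtain ⟨z, hz⟩ := (plVal_int n σ σlast hσ hlast k).2
    have h1 : plVal n σ σlast (2*k+1) < M := hlt _ (by omega)
    have h2 : (z:ℝ) < (w:ℝ) := by rw [← hz, ← hMw]; exact h1
    have h3 : z ≤ w - 1 := by
      have hzw : z < w := by exact_mod_cast h2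
      omega
    have h4 : (z:ℝ) ≤ (w:ℝ) - 1 := by exact_mod_cast h3
    rw [hz, hMw]; linarith
  have heven : ∀ k < m, plVal n σ σlast (2*k) ≤ M - 3/2 := by
    intro k hk
    obtain ⟨z, hz⟩ := (plVal_int n σ σlast hσ hlast k).1
    have h1 : plVal n σ σlast (2*k) < M := hlt _ (by omega)
    have h2 : (z:ℝ) + 1/2 < (w:ℝ) := by rw [← hz, ← hMw]; exact h1
    have hzw : z ≤ w - 1 := by
      have : (z:ℝ) < (w:ℝ) := by linarith
      have : z < w := by exact_mod_cast this
      omega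
    have hne : z ≠ w - 1 := by
      intro hzw1
      have hval : plVal n σ σlast (2*k) = M - 1/2 := by
        rw [hz, hzw1, hMw]; push_cast; ring
      have hstep : plVal n σ σlast (2*k+1)
          = plVal n σ σlast (2*k) + (plSlope n σ σlast (2*k) : ℝ)/2 := rfl
      have hs1 : plSlope n σ σlast (2*k) = -1 := by
        rcases spm (2*k) with h | h
        · exfalso
          have hv : plVal n σ σlast (2*k+1) = M := by
            rw [hstep, hval, h]; push_cast; ring
          have := hlt (2*k+1) (by omega)
          linarith
        · exact h
      have hsig : (sigFull n σ σlast k).1 = -1 := by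
        rw [← plSlope_even]; exact hs1
      cases k with
      | zero =>
        rw [hC1] at hsig; norm_num at hsig
      | succ j =>
        have hjn : j < n := by omega
        have hsj : sigFull n σ σlast j = σ ⟨j, hjn⟩ := dif_pos hjn
        have hj2 : (sigFull n σ σlast j).2 = -1 := by
          rcases (hσ ⟨j, hjn⟩).2 with h | h
          · exfalso
            have h1' := hC2 j hjn (by rw [hsj]; exact h)
            rw [h1'] at hsig; norm_num at hsig
          · rw [hsj]; exact h
        have hso : plSlope n σ σlast (2*j+1) = -1 := by
          rw [plSlope_odd]; exact hj2
        have hidx : 2*(j+1) = (2*j+1)+1 := by ring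
        have hstep2 : plVal n σ σlast (2*(j+1))
            = plVal n σ σlast (2*j+1) + (plSlope n σ σlast (2*j+1) : ℝ)/2 := by
          rw [hidx]; rfl
        rw [hstep2, hso] at hval
        push_cast at hval
        have hvM : plVal n σ σlast (2*j+1) = M := by linarith
        have := hlt (2*j+1) (by omega)
        linarith
    have h5 : z ≤ w - 2 := by omega
    have h6 : (z:ℝ) ≤ (w:ℝ) - 2 := by exact_mod_cast h5
    rw [hz, hMw]; linarith
  have hm1 : 1 ≤ m := by
    by_contra hcon
    have hm0 : m = 0 := by omega
    subst hm0
    have hs0 : plSlope n σ σlast 0 = 1 := by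
      have h0 : plSlope n σ σlast 0 = (sigFull n σ σlast 0).1 := by
        simpa using plSlope_even n σ σlast 0
      rw [h0, hC1]
    have hv1 : plVal n σ σlast 1 = 0 := by
      have h1 : plVal n σ σlast 1 = plVal n σ σlast 0 + (plSlope n σ σlast 0:ℝ)/2 := rfl
      rw [h1, hs0]; norm_num [plVal]
    norm_num at hMval
    rw [hv1] at hMval
    linarith
  obtain ⟨j, rfl⟩ : ∃ j, m = j + 1 := ⟨m - 1, by omega⟩
  have hstep3 : plVal n σ σlast (2*(j+1)+1)
      = plVal n σ σlast (2*(j+1)) + (plSlope n σ σlast (2*(j+1)):ℝ)/2 := rfl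
  have hv2mlt := hlt (2*(j+1)) le_rfl
  have hs2m : plSlope n σ σlast (2*(j+1)) = 1 := by
    rcases spm (2*(j+1)) with h | h
    · exact h
    · exfalso
      have hMv := hMval
      rw [hstep3, h] at hMv
      push_cast at hMv
      linarith
  have hv2m : plVal n σ σlast (2*(j+1)) = M - 1/2 := by
    have hMv := hMval
    rw [hstep3, hs2m] at hMv
    push_cast at hMv
    linarith
  have hidx2 : 2*(j+1) = (2*j+1)+1 := by ring
  have hstep4 : plVal n σ σlast (2*(j+1))
      = plVal n σ σlast (2*j+1) + (plSlope n σ σlast (2*j+1):ℝ)/2 := by rw [hidx2]; rfl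
  have hvodd := hodd j (by omega)
  have hs21 : plSlope n σ σlast (2*j+1) = 1 := by
    rcases spm (2*j+1) with h | h
    · exact h
    · exfalso
      have hv := hv2m
      rw [hstep4, h] at hv
      push_cast at hv
      linarith
  have hvold : plVal n σ σlast (2*j+1) = M - 1 := by
    have hv := hv2m
    rw [hstep4, hs21] at hv
    push_cast at hv
    linarith
  have hstep5 : plVal n σ σlast (2*j+1)
      = plVal n σ σlast (2*j) + (plSlope n σ σlast (2*j):ℝ)/2 := rfl
  have hs11 : plSlope n σ σlast (2*j) = 1 := by
    rcases spm (2*j) with h | h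
    · exact h
    · exfalso
      have hje := heven j (by omega)
      have hv := hvold
      rw [hstep5, h] at hv
      push_cast at hv
      linarith
  have hpair : sigFull n σ σlast ((j+1) - 1) = (1, 1) := by
    have h1 : (sigFull n σ σlast j).1 = 1 := by rw [← plSlope_even]; exact hs11
    have h2 : (sigFull n σ σlast j).2 = 1 := by rw [← plSlope_odd]; exact hs21
    simp only [Nat.add_sub_cancel]
    rw [Prod.ext_iff]
    exact ⟨h1, h2⟩
  have hgcast : ((j+1:ℕ):ℝ) - 1/2 = ((2*j+1:ℕ):ℝ)/2 := by push_cast; ring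
  have hgm : plFun n σ σlast (((j+1:ℕ):ℝ) - 1/2) = M - 1 := by
    rw [hgcast, plFun_grid]; exact hvold
  refine ⟨by omega, hpair, hgm, ?_⟩
  have hboth : ∀ u, u + 1 ≤ 2*(j+1) → plVal n σ σlast u ≤ M - 1 := by
    intro u hu
    rcases Nat.even_or_odd u with ⟨k, hk⟩ | ⟨k, hk⟩
    · have hu2 : u = 2*k := by omega
      have := heven k (by omega)
      rw [hu2]; linarith
    · have hu2 : u = 2*k+1 := by omega
      have := hodd k (by omega)
      rw [hu2]; exact this
  rintro x ⟨hx0, hx1⟩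
  rcases eq_or_lt_of_le hx1 with heq | hlt2
  · rw [heq, hgm]
  · set t := (⌊2*x⌋).toNat with htdef
    have hfl0 : (0:ℤ) ≤ ⌊2*x⌋ := Int.floor_nonneg.mpr (by linarith)
    have htZ : ((t:ℤ)) = ⌊2*x⌋ := by rw [htdef]; exact Int.toNat_of_nonneg hfl0
    have htc : (t:ℝ) = ((⌊2*x⌋:ℤ) : ℝ) := by exact_mod_cast htZ
    have htle : (t:ℝ) ≤ 2*x := by rw [htc]; exact Int.floor_le _
    have htgt : 2*x < (t:ℝ) + 1 := by rw [htc]; exact_mod_cast Int.lt_floor_add_one (2*x)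
    have hxm : (2:ℝ)*x < 2*(j+1) - 1 := by push_cast at hlt2 ⊢; linarith
    have htb : t + 1 < 2*(j+1) := by
      have h1 : (t:ℝ) + 1 < 2*(j+1) := by linarith
      exact_mod_cast h1
    have hv1 : plVal n σ σlast t ≤ M - 1 := hboth t (by omega)
    have hv2 : plVal n σ σlast (t+1) ≤ M - 1 := hboth (t+1) (by omega)
    have hstep6 : plVal n σ σlast (t+1)
        = plVal n σ σlast t + (plSlope n σ σlast t : ℝ)/2 := rfl
    rw [plFun_eq, ← htdef]
    rcases spm t with h | h
    · rw [h]
      rw [hstep6, h] at hv2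
      push_cast at hv2 ⊢
      have hcle : x - (t:ℝ)/2 ≤ 1/2 := by linarith
      linarith
    · rw [h]
      push_cast
      have hcge : 0 ≤ x - (t:ℝ)/2 := by linarith
      linarith [hv1]
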